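/- For every fixed R ≥ 2 there exists a constant C > 0 depending only on g, τ∞, c₂ and R such that the following holds. Let 2 ≤ D ≤ m with m log(m) ≥ D, let g : ℝ → ℝ satisfy (M1) and (M2), let w_1, …, w_m and ŵ_1, …, ŵ_m be unit vectors in ℝ^D with max_{k≠ℓ} ⟨w_k, w_ℓ⟩² ≤ c₂ log(m)/D, max_{k≠ℓ} ⟨ŵ_k, ŵ_ℓ⟩² ≤ c₂ log(m)/D and max_{k≠ℓ} ⟨ŵ_k, w_ℓ⟩² ≤ c₂ log(m)/D, and let τ_1, …, τ_m, τ̂_1, …, τ̂_m ∈ [−τ∞, τ∞]. Then Σ_{r=2}^R 2^r Σ_{ℓ=1}^m S_{r,ℓ}² ≤ (C m log(m)/D) · ( Δ_{W,F}² + (log(m)/D)^{1/2} Δ_{W,O} ). -/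

import Mathlib

open scoped BigOperators
open MeasureTheory ProbabilityTheory

noncomputable def hermitePoly (r : ℕ) (y : ℝ) : ℝ :=
  (1 / Real.sqrt (Nat.factorial r)) * (-1 : ℝ) ^ r * Real.exp (y ^ 2 / 2) *
    iteratedDeriv r (fun t => Real.exp (-(t ^ 2) / 2)) y

noncomputable def hermiteCoeff (h : ℝ → ℝ) (r : ℕ) : ℝ :=
  ∫ y, h y * hermitePoly r y ∂(gaussianReal 0 1)

def dot {d : ℕ} (v w : Fin d → ℝ) : ℝ := ∑ i, v i * w i

/-- Assumption (M1). -/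
def CondM1 (g : ℝ → ℝ) (ti : ℝ) : Prop :=
  ContDiff ℝ 3 g ∧
  (∀ n ∈ Finset.Icc 1 3, ∃ B : ℝ, ∀ t, |iteratedDeriv n g t| ≤ B) ∧
  (StrictMonoOn (iteratedDeriv 2 g) (Set.Ioo (-ti) ti) ∨
    StrictAntiOn (iteratedDeriv 2 g) (Set.Ioo (-ti) ti)) ∧
  ((∀ t ∈ Set.Ioo (-ti) ti, 0 < deriv g t) ∨ (∀ t ∈ Set.Ioo (-ti) ti, deriv g t < 0)) ∧
  ∃ s : ℝ, (s = 1 ∨ s = -1) ∧ ∀ τ ∈ Set.Icc (-ti) ti,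
    s = Real.sign (∫ t, deriv g (t + τ) * Real.exp (-(t ^ 2) / 2))

/-- Assumption (M2). -/
def CondM2 (g : ℝ → ℝ) : Prop :=
  (¬ ∃ p : Polynomial ℝ, p.degree ≤ 3 ∧ ∀ t, deriv g t = Polynomial.eval t p) ∧
  Integrable (fun t => (g t) ^ 2 * Real.exp (-(t ^ 2) / 2))

/-- `S_{r,ℓ} = Σ_k μ_r(g_{τ_k}) μ_r(g'_{τ̂_ℓ}) (⟨ŵ_k, ŵ_ℓ⟩^r − ⟨w_k, ŵ_ℓ⟩^r)`. -/
noncomputable def Sterm {D m : ℕ} (g : ℝ → ℝ) (w wh : Fin m → Fin D → ℝ)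
    (τ τh : Fin m → ℝ) (r : ℕ) (l : Fin m) : ℝ :=
  ∑ k, hermiteCoeff (fun t => g (t + τ k)) r *
    hermiteCoeff (fun t => deriv g (t + τh l)) r *
    ((dot (wh k) (wh l)) ^ r - (dot (w k) (wh l)) ^ r)

/-- `Δ_{W,F}² = ‖Ŵ − W‖_F²`. -/
noncomputable def deltaF2 {D m : ℕ} (w wh : Fin m → Fin D → ℝ) : ℝ :=
  ∑ k, ∑ i, (wh k i - w k i) ^ 2

/-- `Δ_{W,O} = Σ_{k≠k'} |⟨ŵ_k − w_k, ŵ_{k'} − w_{k'}⟩|`. -/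
noncomputable def deltaO {D m : ℕ} (w wh : Fin m → Fin D → ℝ) : ℝ :=
  ∑ k, ∑ k', if k = k' then 0 else |dot (wh k - w k) (wh k' - w k')|



lemma sum_pi_prod {D : ℕ} : ∀ (r : ℕ) (G : Fin r → Fin D → ℝ),
    (∑ f : Fin r → Fin D, ∏ i, G i (f i)) = ∏ i, ∑ x, G i x := by
  intro r
  induction r with
  | zero => intro G; simp
  | succ n ih =>
      intro G
      rw [Fintype.sum_equiv (Fin.consEquiv (fun _ => Fin D)).symm
        (fun f => ∏ i, G i (f i))
        (fun p => G 0 p.1 * ∏ i : Fin n, G i.succ (p.2 i))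
        (fun f => by simp only [Fin.consEquiv, Equiv.coe_fn_symm_mk]; rw [Fin.prod_univ_succ]; rfl)]
      rw [Fintype.sum_prod_type]
      simp_rw [← Finset.mul_sum, ← Finset.sum_mul, ih (fun i => G i.succ)]
      rw [Fin.prod_univ_succ]

lemma prod_sub_prod_fin : ∀ (n : ℕ) (a b : Fin n → ℝ),
    (∏ i, a i) - (∏ i, b i)
      = ∑ j, ∏ i, (if i < j then a i else if i = j then a i - b i else b i) := by
  intro n
  induction n with
  | zero => intro a b; simp
  | succ n ih =>
      intro a b
      rw [Fin.sum_univ_succ]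
      have h0 : (∏ i, (if i < (0 : Fin (n+1)) then a i else if i = 0 then a i - b i else b i))
          = (a 0 - b 0) * ∏ i : Fin n, b i.succ := by
        rw [Fin.prod_univ_succ]
        simp [Fin.succ_ne_zero]
      have hs : ∀ j : Fin n,
          (∏ i, (if i < j.succ then a i else if i = j.succ then a i - b i else b i))
          = a 0 * ∏ i : Fin n,
              (if i < j then a i.succ else if i = j then a i.succ - b i.succ else b i.succ) := by
        intro j
        rw [Fin.prod_univ_succ]
        congr 1
        · simp [Fin.succ_pos]
      simp_rw [h0, hs, ← Finset.mul_sum, ← ih (fun i => a i.succ) (fun i => b i.succ)]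
      rw [Fin.prod_univ_succ a, Fin.prod_univ_succ b]
      ring


lemma integrable_pow_gaussian (n : ℕ) :
    Integrable (fun y : ℝ => y ^ n) (gaussianReal 0 1) := by
  rw [gaussianReal_of_var_ne_zero 0 one_ne_zero]
  rw [integrable_withDensity_iff (measurable_gaussianPDF 0 1)
    (Filter.Eventually.of_forall fun x => ENNReal.ofReal_lt_top)]
  have : ∀ y : ℝ, y ^ n * (gaussianPDF 0 1 y).toReal
      = (Real.sqrt (2 * Real.pi))⁻¹ * (y ^ (n : ℝ) * Real.exp (-(1/2 : ℝ) * y ^ 2)) := by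
    intro y
    rw [gaussianPDF_def, ENNReal.toReal_ofReal (gaussianPDFReal_nonneg 0 1 y),
      gaussianPDFReal_def]
    rw [Real.rpow_natCast]
    push_cast
    ring_nf
  rw [show (fun y : ℝ => y ^ n * (gaussianPDF 0 1 y).toReal) = _ from funext this]
  exact (integrable_rpow_mul_exp_neg_mul_sq (by norm_num) (by exact lt_of_lt_of_le neg_one_lt_zero (Nat.cast_nonneg n))).const_mul _

lemma integrable_polyeval_gaussian (p : Polynomial ℝ) :
    Integrable (fun y : ℝ => p.eval y) (gaussianReal 0 1) := by
  have : ∀ y : ℝ, p.eval y = ∑ i ∈ Finset.range (p.natDegree + 1), p.coeff i * y ^ i := by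
    intro y; rw [Polynomial.eval_eq_sum_range]
  rw [show (fun y : ℝ => p.eval y) = _ from funext this]
  exact integrable_finset_sum _ fun i _ => (integrable_pow_gaussian i).const_mul _

lemma iteratedDeriv_gauss_poly (r : ℕ) : ∃ q : Polynomial ℝ,
    iteratedDeriv r (fun t => Real.exp (-(t ^ 2) / 2)) = fun y => q.eval y * Real.exp (-(y ^ 2) / 2) := by
  induction r with
  | zero => exact ⟨1, by simp [iteratedDeriv_zero]⟩
  | succ n ih =>
      obtain ⟨q, hq⟩ := ih
      refine ⟨q.derivative - Polynomial.X * q, ?_⟩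
      rw [iteratedDeriv_succ, hq]
      funext y
      have hexp : HasDerivAt (fun y : ℝ => Real.exp (-(y ^ 2) / 2))
          (-y * Real.exp (-(y ^ 2) / 2)) y := by
        have h1 : HasDerivAt (fun y : ℝ => -(y ^ 2) / 2) (-y) y := by
          have := ((hasDerivAt_pow 2 y).neg).div_const 2
          simpa using this.congr_deriv (by push_cast; ring)
        simpa [mul_comm] using h1.exp
      have := ((q.hasDerivAt y).mul hexp)
      rw [HasDerivAt.deriv (f := fun y => Polynomial.eval y q * Real.exp (-(y ^ 2) / 2)) this]
      simp [Polynomial.eval_sub, Polynomial.eval_mul]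
      ring

lemma hermitePoly_poly (r : ℕ) : ∃ q : Polynomial ℝ,
    ∀ y, hermitePoly r y = q.eval y := by
  obtain ⟨q, hq⟩ := iteratedDeriv_gauss_poly r
  refine ⟨Polynomial.C ((1 / Real.sqrt (Nat.factorial r)) * (-1 : ℝ) ^ r) * q, fun y => ?_⟩
  have hexp : Real.exp (y ^ 2 / 2) * Real.exp (-(y ^ 2) / 2) = 1 := by
    rw [← Real.exp_add, show y ^ 2 / 2 + -(y ^ 2) / 2 = 0 by ring, Real.exp_zero]
  calc hermitePoly r y
      = ((1 / Real.sqrt (Nat.factorial r)) * (-1 : ℝ) ^ r * q.eval y) *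
          (Real.exp (y ^ 2 / 2) * Real.exp (-(y ^ 2) / 2)) := by
        rw [hermitePoly, hq]; ring
    _ = _ := by rw [hexp]; simp


noncomputable def hermBound (r : ℕ) (a b : ℝ) : ℝ :=
  ∫ y, (a + b * |y|) * |hermitePoly r y| ∂(gaussianReal 0 1)

lemma integrable_hermBound (r : ℕ) (a b : ℝ) :
    Integrable (fun y => (a + b * |y|) * |hermitePoly r y|) (gaussianReal 0 1) := by
  obtain ⟨q, hq⟩ := hermitePoly_poly r
  have : ∀ y : ℝ, (a + b * |y|) * |hermitePoly r y|
      = a * |q.eval y| + b * |(Polynomial.X * q).eval y| := by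
    intro y
    rw [hq, Polynomial.eval_mul, Polynomial.eval_X, abs_mul]
    ring
  rw [show (fun y : ℝ => (a + b * |y|) * |hermitePoly r y|) = _ from funext this]
  exact ((integrable_polyeval_gaussian q).abs.const_mul a).add
    ((integrable_polyeval_gaussian (Polynomial.X * q)).abs.const_mul b)

lemma hermiteCoeff_bound (r : ℕ) (a b : ℝ) (h : ℝ → ℝ)
    (hb : ∀ y, |h y| ≤ a + b * |y|) :
    |hermiteCoeff h r| ≤ hermBound r a b := by
  rw [← Real.norm_eq_abs, hermiteCoeff, hermBound]
  refine norm_integral_le_of_norm_le (integrable_hermBound r a b)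
    (Filter.Eventually.of_forall fun y => ?_)
  rw [Real.norm_eq_abs, abs_mul]
  exact mul_le_mul_of_nonneg_right (hb y) (abs_nonneg _)

lemma hermBound_nonneg (r : ℕ) (a b : ℝ) (ha : 0 ≤ a) (hbb : 0 ≤ b) : 0 ≤ hermBound r a b := by
  refine integral_nonneg fun y => ?_
  have : 0 ≤ a + b * |y| := by positivity
  positivity

lemma linear_growth {g : ℝ → ℝ} (hg : ContDiff ℝ 3 g) {K : ℝ}
    (hK : ∀ t, |deriv g t| ≤ K) : ∀ x : ℝ, |g x| ≤ |g 0| + K * |x| := by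
  intro x
  have hd : ∀ y ∈ Set.univ, DifferentiableAt ℝ g y :=
    fun y _ => (hg.differentiable (by norm_num)).differentiableAt
  have := Convex.norm_image_sub_le_of_norm_deriv_le hd
    (fun y _ => by rw [Real.norm_eq_abs]; exact hK y) convex_univ (Set.mem_univ 0) (Set.mem_univ x)
  rw [Real.norm_eq_abs, Real.norm_eq_abs, sub_zero] at this
  calc |g x| = |g 0 + (g x - g 0)| := by ring_nf
    _ ≤ |g 0| + |g x - g 0| := abs_add_le _ _
    _ ≤ |g 0| + K * |x| := by linarith


lemma sum_sq_eq_one_of_dot {D : ℕ} {u : Fin D → ℝ} (hu : dot u u = 1) :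
    (∑ i, u i ^ 2) = 1 := by
  rw [← hu, dot]; exact Finset.sum_congr rfl fun i _ => pow_two (u i)

lemma dot_abs_le_one {D : ℕ} {u v : Fin D → ℝ} (hu : dot u u = 1) (hv : dot v v = 1) :
    |dot u v| ≤ 1 := by
  have h := Finset.sum_mul_sq_le_sq_mul_sq Finset.univ u v
  rw [sum_sq_eq_one_of_dot hu, sum_sq_eq_one_of_dot hv, mul_one] at h
  rw [abs_le_one_iff_mul_self_le_one, ← pow_two]
  exact h

lemma dot_self_nonneg {D : ℕ} (u : Fin D → ℝ) : 0 ≤ dot u u :=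
  Finset.sum_nonneg fun i _ => mul_self_nonneg (u i)

lemma cs_sum_le {ι : Type*} [Fintype ι] (a b : ι → ℝ) :
    (∑ f, a f * b f) ≤ Real.sqrt (∑ f, (a f) ^ 2) * Real.sqrt (∑ f, (b f) ^ 2) := by
  have h := Finset.sum_mul_sq_le_sq_mul_sq Finset.univ a b
  calc (∑ f, a f * b f) ≤ |∑ f, a f * b f| := le_abs_self _
    _ = Real.sqrt ((∑ f, a f * b f) ^ 2) := (Real.sqrt_sq_eq_abs _).symm
    _ ≤ Real.sqrt ((∑ f, (a f) ^ 2) * (∑ f, (b f) ^ 2)) := Real.sqrt_le_sqrt h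
    _ = _ := Real.sqrt_mul (Finset.sum_nonneg fun f _ => sq_nonneg _) _

lemma per_r_bound {D m : ℕ} (w wh : Fin m → Fin D → ℝ) (μ ν : Fin m → ℝ) (Bb e2 : ℝ)
    (hBb : 0 ≤ Bb) (hμ : ∀ k, |μ k| ≤ Bb) (hν : ∀ l, |ν l| ≤ Bb)
    (hw : ∀ k, dot (w k) (w k) = 1) (hwh : ∀ k, dot (wh k) (wh k) = 1)
    (he2 : 0 ≤ e2)
    (hcww : ∀ k l, k ≠ l → (dot (w k) (w l)) ^ 2 ≤ e2)
    (hcwhwh : ∀ k l, k ≠ l → (dot (wh k) (wh l)) ^ 2 ≤ e2)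
    (r : ℕ) (hr : 2 ≤ r) :
    ∑ l, (ν l * ∑ k, μ k * ((dot (wh k) (wh l)) ^ r - (dot (w k) (wh l)) ^ r)) ^ 2
      ≤ Bb ^ 4 * r ^ 2 * (1 + m * e2) * (deltaF2 w wh + Real.sqrt e2 * deltaO w wh) := by
  classical
  set tp : (Fin D → ℝ) → (Fin r → Fin D) → ℝ := fun v f => ∏ i, v (f i) with htp
  set T : (Fin r → Fin D) → ℝ :=
    fun f => ∑ k, μ k * (tp (wh k) f - tp (w k) f) with hT
  set β : Fin m → ℝ :=
    fun l => ∑ k, μ k * ((dot (wh k) (wh l)) ^ r - (dot (w k) (wh l)) ^ r) with hβ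
  -- L1 : tensor-power dot product identity
  have L1 : ∀ u v : Fin D → ℝ, (∑ f : Fin r → Fin D, tp u f * tp v f) = (dot u v) ^ r := by
    intro u v
    have h1 : ∀ f : Fin r → Fin D, tp u f * tp v f
        = ∏ i, (fun (_ : Fin r) (x : Fin D) => u x * v x) i (f i) := by
      intro f; rw [htp]; simp only; rw [← Finset.prod_mul_distrib]
    rw [Finset.sum_congr rfl fun f _ => h1 f, sum_pi_prod r (fun _ x => u x * v x)]
    simp [dot, Finset.prod_const]
  -- L2 : β as a tensor contraction
  have L2 : ∀ l, β l = ∑ f, T f * tp (wh l) f := by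
    intro l
    have h1 : ∀ f, T f * tp (wh l) f
        = ∑ k, μ k * (tp (wh k) f * tp (wh l) f - tp (w k) f * tp (wh l) f) := by
      intro f
      rw [hT]; simp only
      rw [Finset.sum_mul]
      exact Finset.sum_congr rfl fun k _ => by ring
    rw [Finset.sum_congr rfl fun f _ => h1 f, Finset.sum_comm]
    refine Finset.sum_congr rfl fun k _ => ?_
    rw [← Finset.mul_sum, Finset.sum_sub_distrib, L1, L1]
  -- the decomposition tensors
  set V : Fin r → Fin m → (Fin r → Fin D) → ℝ := fun j k f =>
    ∏ i, (if i < j then wh k (f i) else if i = j then wh k (f i) - w k (f i) else w k (f i))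
    with hV
  set U : Fin r → (Fin r → Fin D) → ℝ := fun j f => ∑ k, μ k * V j k f with hU
  have hTU : ∀ f, T f = ∑ j, U j f := by
    intro f
    rw [hT]; simp only
    have h1 : ∀ k, tp (wh k) f - tp (w k) f = ∑ j, V j k f := by
      intro k
      rw [htp, hV]; simp only
      exact prod_sub_prod_fin r (fun i => wh k (f i)) (fun i => w k (f i))
    rw [Finset.sum_congr rfl fun k _ => by rw [h1 k, Finset.mul_sum], Finset.sum_comm]
  -- inner products of the pieces
  have hVV : ∀ (j : Fin r) (k k' : Fin m), (∑ f, V j k f * V j k' f)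
      = ∏ i : Fin r, (if i < j then dot (wh k) (wh k')
          else if i = j then dot (wh k - w k) (wh k' - w k') else dot (w k) (w k')) := by
    intro j k k'
    have h1 : ∀ f, V j k f * V j k' f = ∏ i,
        (fun (i : Fin r) (x : Fin D) => if i < j then wh k x * wh k' x
          else if i = j then (wh k x - w k x) * (wh k' x - w k' x)
          else w k x * w k' x) i (f i) := by
      intro f
      rw [hV]; simp only
      rw [← Finset.prod_mul_distrib]
      exact Finset.prod_congr rfl fun i _ => by split_ifs <;> ring
    rw [Finset.sum_congr rfl fun f _ => h1 f,
      sum_pi_prod r (fun (i : Fin r) (x : Fin D) => if i < j then wh k x * wh k' x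
        else if i = j then (wh k x - w k x) * (wh k' x - w k' x) else w k x * w k' x)]
    refine Finset.prod_congr rfl fun i _ => ?_
    split_ifs <;> simp [dot, Pi.sub_apply]
  have h0r : 0 < r := by omega
  have h1r : 1 < r := by omega
  -- bound for off-diagonal products
  have key_prod : ∀ (j : Fin r) (k k' : Fin m), k ≠ k' →
      |∏ i : Fin r, (if i < j then dot (wh k) (wh k')
          else if i = j then dot (wh k - w k) (wh k' - w k') else dot (w k) (w k'))|
        ≤ Real.sqrt e2 * |dot (wh k - w k) (wh k' - w k')| := by
    intro j k k' hkk
    set c : Fin r → ℝ := fun i => (if i < j then dot (wh k) (wh k')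
          else if i = j then dot (wh k - w k) (wh k' - w k') else dot (w k) (w k')) with hc
    set z : Fin r := ⟨0, h0r⟩ with hz
    set o : Fin r := ⟨1, h1r⟩ with ho
    have hoz : o ≠ z := by simp [hz, ho, Fin.ext_iff]
    set i₀ : Fin r := if j = z then o else z with hi₀
    have hne : i₀ ≠ j := by
      rw [hi₀]
      by_cases h : j = z
      · rw [if_pos h, h]; exact hoz
      · rw [if_neg h]; exact fun hzj => h hzj.symm
    have habs1 : ∀ i : Fin r, i ≠ j → |c i| ≤ 1 := by
      intro i hij
      rw [hc]; simp only
      split_ifs with h1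
      · exact dot_abs_le_one (hwh k) (hwh k')
      · exact dot_abs_le_one (hw k) (hw k')
    have hsqrt : ∀ x : ℝ, x ^ 2 ≤ e2 → |x| ≤ Real.sqrt e2 := fun x hx => by
      rw [← Real.sqrt_sq_eq_abs]; exact Real.sqrt_le_sqrt hx
    have habs0 : |c i₀| ≤ Real.sqrt e2 := by
      rw [hc]; simp only
      split_ifs with h1
      · exact hsqrt _ (hcwhwh k k' hkk)
      · exact hsqrt _ (hcww k k' hkk)
    have hcj : c j = dot (wh k - w k) (wh k' - w k') := by
      rw [hc]; simp
    calc |∏ i, c i| = ∏ i, |c i| := Finset.abs_prod _ _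
      _ = |c j| * ∏ i ∈ Finset.univ.erase j, |c i| :=
          (Finset.mul_prod_erase Finset.univ (fun i => |c i|) (Finset.mem_univ j)).symm
      _ = |c j| * (|c i₀| * ∏ i ∈ (Finset.univ.erase j).erase i₀, |c i|) := by
          rw [Finset.mul_prod_erase (Finset.univ.erase j) (fun i => |c i|)
            (Finset.mem_erase.mpr ⟨hne, Finset.mem_univ _⟩)]
      _ ≤ |c j| * (Real.sqrt e2 * 1) := by
          refine mul_le_mul_of_nonneg_left ?_ (abs_nonneg _)
          refine mul_le_mul habs0 ?_ (Finset.prod_nonneg fun i _ => abs_nonneg _)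
            (Real.sqrt_nonneg _)
          refine Finset.prod_le_one (fun i _ => abs_nonneg _) (fun i hi => ?_)
          exact habs1 i (Finset.mem_erase.mp (Finset.mem_of_mem_erase hi)).1
      _ = Real.sqrt e2 * |dot (wh k - w k) (wh k' - w k')| := by rw [hcj]; ring
  -- diagonal products
  have key_diag : ∀ (j : Fin r) (k : Fin m),
      (∏ i : Fin r, (if i < j then dot (wh k) (wh k)
          else if i = j then dot (wh k - w k) (wh k - w k) else dot (w k) (w k)))
        = dot (wh k - w k) (wh k - w k) := by
    intro j k
    rw [Finset.prod_eq_single j (fun b _ hbj => ?_) (fun h => absurd (Finset.mem_univ j) h)]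
    · simp
    · split_ifs with h1
      · exact hwh k
      · exact hw k
  -- bound on each ∑ (U j)^2
  have hUU : ∀ j : Fin r, (∑ f, (U j f) ^ 2)
      ≤ Bb ^ 2 * (deltaF2 w wh + Real.sqrt e2 * deltaO w wh) := by
    intro j
    have hexp : (∑ f, (U j f) ^ 2) = ∑ k, ∑ k', μ k * μ k' * (∑ f, V j k f * V j k' f) := by
      have h1 : ∀ f, (U j f) ^ 2 = ∑ k, ∑ k', (μ k * V j k f) * (μ k' * V j k' f) := by
        intro f; rw [hU]; simp only; rw [pow_two, Finset.sum_mul_sum]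
      rw [Finset.sum_congr rfl fun f _ => h1 f, Finset.sum_comm]
      refine Finset.sum_congr rfl fun k _ => ?_
      rw [Finset.sum_comm]
      refine Finset.sum_congr rfl fun k' _ => ?_
      rw [Finset.mul_sum]
      exact Finset.sum_congr rfl fun f _ => by ring
    rw [hexp]
    have hbound : ∀ k k', μ k * μ k' * (∑ f, V j k f * V j k' f)
        ≤ (if k = k' then Bb ^ 2 * dot (wh k - w k) (wh k - w k) else 0)
          + Bb ^ 2 * Real.sqrt e2 *
            (if k = k' then 0 else |dot (wh k - w k) (wh k' - w k')|) := by
      intro k k'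
      by_cases hkk : k = k'
      · subst hkk
        rw [if_pos rfl, if_pos rfl, hVV, key_diag, mul_zero, add_zero]
        have hμ2 : μ k * μ k ≤ Bb ^ 2 := by nlinarith [hμ k, abs_nonneg (μ k), le_abs_self (μ k), neg_abs_le (μ k)]
        exact mul_le_mul_of_nonneg_right hμ2 (dot_self_nonneg _)
      · rw [if_neg hkk, if_neg hkk, hVV, zero_add]
        set P : ℝ := ∏ i : Fin r, (if i < j then dot (wh k) (wh k')
          else if i = j then dot (wh k - w k) (wh k' - w k') else dot (w k) (w k')) with hP
        calc μ k * μ k' * P ≤ |μ k * μ k' * P| := le_abs_self _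
          _ = |μ k| * |μ k'| * |P| := by rw [abs_mul, abs_mul]
          _ ≤ (Bb * Bb) * (Real.sqrt e2 * |dot (wh k - w k) (wh k' - w k')|) :=
              mul_le_mul (mul_le_mul (hμ k) (hμ k') (abs_nonneg _) hBb)
                (key_prod j k k' hkk) (abs_nonneg _) (by positivity)
          _ = Bb ^ 2 * Real.sqrt e2 * |dot (wh k - w k) (wh k' - w k')| := by ring
    calc ∑ k, ∑ k', μ k * μ k' * (∑ f, V j k f * V j k' f)
        ≤ ∑ k, ∑ k', ((if k = k' then Bb ^ 2 * dot (wh k - w k) (wh k - w k) else 0)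
          + Bb ^ 2 * Real.sqrt e2 *
            (if k = k' then 0 else |dot (wh k - w k) (wh k' - w k')|)) :=
          Finset.sum_le_sum fun k _ => Finset.sum_le_sum fun k' _ => hbound k k'
      _ = Bb ^ 2 * (deltaF2 w wh + Real.sqrt e2 * deltaO w wh) := by
          have hdF : (∑ k, dot (wh k - w k) (wh k - w k)) = deltaF2 w wh := by
            rw [deltaF2]
            refine Finset.sum_congr rfl fun k _ => ?_
            simp [dot, Pi.sub_apply, pow_two]
          have hdO : deltaO w wh
              = ∑ k, ∑ k', (if k = k' then 0 else |dot (wh k - w k) (wh k' - w k')|) := rfl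
          have h1 : ∀ k : Fin m,
              (∑ k', ((if k = k' then Bb ^ 2 * dot (wh k - w k) (wh k - w k) else 0)
                + Bb ^ 2 * Real.sqrt e2 *
                  (if k = k' then 0 else |dot (wh k - w k) (wh k' - w k')|)))
              = Bb ^ 2 * dot (wh k - w k) (wh k - w k)
                + Bb ^ 2 * Real.sqrt e2 *
                  ∑ k', (if k = k' then 0 else |dot (wh k - w k) (wh k' - w k')|) := by
            intro k
            rw [Finset.sum_add_distrib, Finset.sum_ite_eq Finset.univ k,
              if_pos (Finset.mem_univ k), ← Finset.mul_sum]
          rw [Finset.sum_congr rfl fun k _ => h1 k, Finset.sum_add_distrib, ← Finset.mul_sum,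
            ← Finset.mul_sum, hdF, ← hdO]
          ring
  -- bound on the full tensor T
  have hUUnn : ∀ j : Fin r, 0 ≤ ∑ f, (U j f) ^ 2 :=
    fun j => Finset.sum_nonneg fun f _ => sq_nonneg _
  set Wb : ℝ := Bb ^ 2 * (deltaF2 w wh + Real.sqrt e2 * deltaO w wh) with hWb
  have hWb0 : 0 ≤ Wb := le_trans (hUUnn ⟨0, h0r⟩) (hUU ⟨0, h0r⟩)
  have hTT : (∑ f, (T f) ^ 2) ≤ (r : ℝ) ^ 2 * Wb := by
    have h1 : ∀ f, (T f) ^ 2 = ∑ j, ∑ j', U j f * U j' f := by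
      intro f; rw [hTU f, pow_two, Finset.sum_mul_sum]
    have h2 : ∀ j j' : Fin r, (∑ f, U j f * U j' f) ≤ Wb := by
      intro j j'
      calc (∑ f, U j f * U j' f)
          ≤ Real.sqrt (∑ f, (U j f) ^ 2) * Real.sqrt (∑ f, (U j' f) ^ 2) := cs_sum_le _ _
        _ ≤ Real.sqrt Wb * Real.sqrt Wb :=
            mul_le_mul (Real.sqrt_le_sqrt (hUU j)) (Real.sqrt_le_sqrt (hUU j'))
              (Real.sqrt_nonneg _) (Real.sqrt_nonneg _)
        _ = Wb := Real.mul_self_sqrt hWb0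
    calc (∑ f, (T f) ^ 2) = ∑ f, ∑ j, ∑ j', U j f * U j' f :=
          Finset.sum_congr rfl fun f _ => h1 f
      _ = ∑ j, ∑ j', ∑ f, U j f * U j' f := by
          rw [Finset.sum_comm]
          exact Finset.sum_congr rfl fun j _ => Finset.sum_comm
      _ ≤ ∑ j : Fin r, ∑ j' : Fin r, Wb :=
          Finset.sum_le_sum fun j _ => Finset.sum_le_sum fun j' _ => h2 j j'
      _ = (r : ℝ) ^ 2 * Wb := by
          simp [Finset.sum_const, Finset.card_univ]
          ring
  -- Gram bound
  have hβT : (∑ l, (β l) ^ 2) ≤ (1 + (m : ℝ) * e2) * ∑ f, (T f) ^ 2 := by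
    set s : ℝ := ∑ l, (β l) ^ 2 with hs
    have hsnn : 0 ≤ s := Finset.sum_nonneg fun l _ => sq_nonneg _
    set Z : (Fin r → Fin D) → ℝ := fun f => ∑ l, β l * tp (wh l) f with hZ
    have hsZ : s = ∑ f, T f * Z f := by
      rw [hs]
      calc (∑ l, (β l) ^ 2) = ∑ l, β l * ∑ f, T f * tp (wh l) f := by
            refine Finset.sum_congr rfl fun l _ => ?_
            rw [← L2 l, pow_two]
        _ = ∑ l, ∑ f, T f * (β l * tp (wh l) f) := by
            refine Finset.sum_congr rfl fun l _ => ?_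
            rw [Finset.mul_sum]
            exact Finset.sum_congr rfl fun f _ => by ring
        _ = ∑ f, ∑ l, T f * (β l * tp (wh l) f) := Finset.sum_comm
        _ = ∑ f, T f * Z f := by
            refine Finset.sum_congr rfl fun f _ => ?_
            rw [hZ]; simp only
            rw [Finset.mul_sum]
    have hZZ : (∑ f, (Z f) ^ 2) ≤ (1 + (m : ℝ) * e2) * s := by
      have h1 : (∑ f, (Z f) ^ 2) = ∑ l, ∑ l', β l * β l' * (dot (wh l) (wh l')) ^ r := by
        have ha : ∀ f, (Z f) ^ 2 = ∑ l, ∑ l', (β l * tp (wh l) f) * (β l' * tp (wh l') f) := by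
          intro f; rw [hZ]; simp only; rw [pow_two, Finset.sum_mul_sum]
        rw [Finset.sum_congr rfl fun f _ => ha f, Finset.sum_comm]
        refine Finset.sum_congr rfl fun l _ => ?_
        rw [Finset.sum_comm]
        refine Finset.sum_congr rfl fun l' _ => ?_
        rw [← L1 (wh l) (wh l'), Finset.mul_sum]
        exact Finset.sum_congr rfl fun f _ => by ring
      have h2 : ∀ l l', β l * β l' * (dot (wh l) (wh l')) ^ r
          ≤ ((β l) ^ 2 + (β l') ^ 2) / 2 * (if l = l' then 1 else e2) := by
        intro l l'
        by_cases hll : l = l'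
        · subst hll
          rw [if_pos rfl, hwh l, one_pow, mul_one, mul_one]
          nlinarith [sq_nonneg (β l)]
        · rw [if_neg hll]
          have hle : |dot (wh l) (wh l')| ^ r ≤ e2 := by
            calc |dot (wh l) (wh l')| ^ r ≤ |dot (wh l) (wh l')| ^ 2 :=
                  pow_le_pow_of_le_one (abs_nonneg _) (dot_abs_le_one (hwh l) (hwh l')) hr
              _ = (dot (wh l) (wh l')) ^ 2 := sq_abs _
              _ ≤ e2 := hcwhwh l l' hll
          calc β l * β l' * (dot (wh l) (wh l')) ^ r
              ≤ |β l * β l' * (dot (wh l) (wh l')) ^ r| := le_abs_self _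
            _ = |β l| * |β l'| * |dot (wh l) (wh l')| ^ r := by
                rw [abs_mul, abs_mul, abs_pow]
            _ ≤ |β l| * |β l'| * e2 :=
                mul_le_mul_of_nonneg_left hle (mul_nonneg (abs_nonneg _) (abs_nonneg _))
            _ ≤ ((β l) ^ 2 + (β l') ^ 2) / 2 * e2 := by
                refine mul_le_mul_of_nonneg_right ?_ he2
                nlinarith [sq_nonneg (|β l| - |β l'|), sq_abs (β l), sq_abs (β l')]
      have h3 : ∀ l l', ((β l) ^ 2 + (β l') ^ 2) / 2 * (if l = l' then (1:ℝ) else e2)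
          = (β l) ^ 2 / 2 * (if l = l' then (1:ℝ) else e2)
            + (β l') ^ 2 / 2 * (if l = l' then (1:ℝ) else e2) := fun l l' => by ring
      have hsym : (∑ l, ∑ l', (β l') ^ 2 / 2 * (if l = l' then (1:ℝ) else e2))
          = ∑ l, ∑ l', (β l) ^ 2 / 2 * (if l = l' then (1:ℝ) else e2) := by
        rw [Finset.sum_comm]
        refine Finset.sum_congr rfl fun l _ => Finset.sum_congr rfl fun l' _ => ?_
        by_cases h : l = l'
        · rw [h]
        · rw [if_neg h, if_neg fun hh => h hh.symm]
      have hrow : ∀ l : Fin m, (∑ l', (if l = l' then (1:ℝ) else e2)) ≤ 1 + (m : ℝ) * e2 := by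
        intro l
        calc (∑ l', (if l = l' then (1:ℝ) else e2))
            ≤ ∑ l' : Fin m, (e2 + if l = l' then 1 else 0) := by
              refine Finset.sum_le_sum fun l' _ => ?_
              split_ifs <;> simp [he2]
          _ = (m : ℝ) * e2 + 1 := by
              rw [Finset.sum_add_distrib, Finset.sum_const, Finset.sum_ite_eq Finset.univ l,
                if_pos (Finset.mem_univ l), Finset.card_univ, Fintype.card_fin, nsmul_eq_mul]
          _ ≤ 1 + (m : ℝ) * e2 := le_of_eq (by ring)
      calc (∑ f, (Z f) ^ 2) = ∑ l, ∑ l', β l * β l' * (dot (wh l) (wh l')) ^ r := h1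
        _ ≤ ∑ l, ∑ l', ((β l) ^ 2 + (β l') ^ 2) / 2 * (if l = l' then 1 else e2) :=
            Finset.sum_le_sum fun l _ => Finset.sum_le_sum fun l' _ => h2 l l'
        _ = ∑ l, ∑ l', (β l) ^ 2 * (if l = l' then 1 else e2) := by
            rw [Finset.sum_congr rfl fun l _ => Finset.sum_congr rfl fun l' _ => h3 l l']
            rw [Finset.sum_congr rfl fun l (_ : l ∈ Finset.univ) => Finset.sum_add_distrib,
              Finset.sum_add_distrib, hsym, ← Finset.sum_add_distrib]
            refine Finset.sum_congr rfl fun l _ => ?_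
            rw [← Finset.sum_add_distrib]
            exact Finset.sum_congr rfl fun l' _ => by ring
        _ = ∑ l, (β l) ^ 2 * ∑ l', (if l = l' then 1 else e2) := by
            exact Finset.sum_congr rfl fun l _ => (Finset.mul_sum _ _ _).symm
        _ ≤ ∑ l, (β l) ^ 2 * (1 + (m : ℝ) * e2) :=
            Finset.sum_le_sum fun l _ => mul_le_mul_of_nonneg_left (hrow l) (sq_nonneg _)
        _ = (1 + (m : ℝ) * e2) * s := by rw [hs, ← Finset.sum_mul]; ring
    have hTnn : 0 ≤ ∑ f, (T f) ^ 2 := Finset.sum_nonneg fun f _ => sq_nonneg _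
    rcases eq_or_lt_of_le hsnn with h0 | hpos
    · rw [← h0]
      have h1e : (0:ℝ) ≤ 1 + (m : ℝ) * e2 := by positivity
      exact mul_nonneg h1e hTnn
    · have h1 : s ^ 2 ≤ (∑ f, (T f) ^ 2) * ((1 + (m : ℝ) * e2) * s) := by
        calc s ^ 2 = (∑ f, T f * Z f) ^ 2 := by rw [hsZ]
          _ ≤ (∑ f, (T f) ^ 2) * (∑ f, (Z f) ^ 2) :=
              Finset.sum_mul_sq_le_sq_mul_sq Finset.univ T Z
          _ ≤ (∑ f, (T f) ^ 2) * ((1 + (m : ℝ) * e2) * s) :=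
              mul_le_mul_of_nonneg_left hZZ hTnn
      nlinarith [h1, hpos]
  -- final assembly
  have hν2 : ∀ l, (ν l) ^ 2 ≤ Bb ^ 2 := by
    intro l
    nlinarith [hν l, abs_nonneg (ν l), le_abs_self (ν l), neg_abs_le (ν l)]
  calc (∑ l, (ν l * β l) ^ 2) ≤ ∑ l, Bb ^ 2 * (β l) ^ 2 := by
        refine Finset.sum_le_sum fun l _ => ?_
        rw [mul_pow]
        exact mul_le_mul_of_nonneg_right (hν2 l) (sq_nonneg _)
    _ = Bb ^ 2 * ∑ l, (β l) ^ 2 := (Finset.mul_sum _ _ _).symm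
    _ ≤ Bb ^ 2 * ((1 + (m : ℝ) * e2) * ∑ f, (T f) ^ 2) := by
        refine mul_le_mul_of_nonneg_left hβT (by positivity)
    _ ≤ Bb ^ 2 * ((1 + (m : ℝ) * e2) * ((r : ℝ) ^ 2 * Wb)) := by
        refine mul_le_mul_of_nonneg_left (mul_le_mul_of_nonneg_left hTT (by positivity))
          (by positivity)
    _ = Bb ^ 4 * (r : ℝ) ^ 2 * (1 + (m : ℝ) * e2)
        * (deltaF2 w wh + Real.sqrt e2 * deltaO w wh) := by
        rw [hWb]; ring

/-- Bound on the truncated weighted series `Σ_{r=2}^R 2^r Σ_ℓ S_{r,ℓ}²`. -/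
theorem Sterm_truncated_series_bound
    (g : ℝ → ℝ) (tinf : ℝ) (htinf : 0 < tinf) (hM1 : CondM1 g tinf) (hM2 : CondM2 g)
    (c₂ : ℝ) (hc₂ : 0 < c₂) (R : ℕ) (hR : 2 ≤ R) :
    ∃ C : ℝ, 0 < C ∧
      ∀ (D m : ℕ), 2 ≤ D → D ≤ m → (D : ℝ) ≤ (m : ℝ) * Real.log m →
      ∀ (w wh : Fin m → Fin D → ℝ) (τ τh : Fin m → ℝ),
        (∀ k, ∑ i, (w k i) ^ 2 = 1) → (∀ k, ∑ i, (wh k i) ^ 2 = 1) →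
        (∀ k l, k ≠ l → (dot (w k) (w l)) ^ 2 ≤ c₂ * Real.log m / D) →
        (∀ k l, k ≠ l → (dot (wh k) (wh l)) ^ 2 ≤ c₂ * Real.log m / D) →
        (∀ k l, k ≠ l → (dot (wh k) (w l)) ^ 2 ≤ c₂ * Real.log m / D) →
        (∀ k, τ k ∈ Set.Icc (-tinf) tinf) → (∀ k, τh k ∈ Set.Icc (-tinf) tinf) →
        ∑ r ∈ Finset.Icc 2 R, (2 : ℝ) ^ r * ∑ l, (Sterm g w wh τ τh r l) ^ 2 ≤
          C * m * Real.log m / D *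
            (deltaF2 w wh + Real.sqrt (Real.log m / D) * deltaO w wh) := by
  classical
  obtain ⟨K, hK0⟩ := hM1.2.1 1 (by decide)
  have hK : ∀ t, |deriv g t| ≤ K := fun t => by
    have := hK0 t; rwa [iteratedDeriv_one] at this
  have hKnn : 0 ≤ K := le_trans (abs_nonneg _) (hK 0)
  have hgrow : ∀ x : ℝ, |g x| ≤ |g 0| + K * |x| := linear_growth hM1.1 hK
  set a₀ : ℝ := |g 0| + K * (tinf + 1) with ha₀
  have ha₀nn : 0 ≤ a₀ := by positivity
  refine ⟨(∑ r ∈ Finset.Icc 2 R, (2:ℝ) ^ r * (r:ℝ) ^ 2 * (hermBound r a₀ K) ^ 4)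
      * ((1 + c₂) * (1 + Real.sqrt c₂)) + 1, ?_, ?_⟩
  · have h0 : 0 ≤ ∑ r ∈ Finset.Icc 2 R, (2:ℝ) ^ r * (r:ℝ) ^ 2 * (hermBound r a₀ K) ^ 4 :=
      Finset.sum_nonneg fun r _ => by
        have := hermBound_nonneg r a₀ K ha₀nn hKnn
        positivity
    have h1 : (0:ℝ) ≤ Real.sqrt c₂ := Real.sqrt_nonneg _
    have h2 := mul_nonneg h0 (mul_nonneg (by linarith : (0:ℝ) ≤ 1 + c₂)
      (by linarith : (0:ℝ) ≤ 1 + Real.sqrt c₂))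
    linarith
  · intro D m hD2 hDm hDmlog w wh τ τh hw hwh hcww hcwhwh hcwhw hτ hτh
    have hD0 : (0:ℝ) < (D:ℝ) := by
      have : 0 < D := by omega
      exact_mod_cast this
    have hm1 : (1:ℝ) ≤ (m:ℝ) := by
      have : 1 ≤ m := by omega
      exact_mod_cast this
    have hlognn : 0 ≤ Real.log m := Real.log_nonneg hm1
    have hbase1 : (1:ℝ) ≤ (m:ℝ) * Real.log m / D := (one_le_div hD0).mpr hDmlog
    set e2 : ℝ := min 1 (c₂ * Real.log m / D) with he2def
    have he2nn : 0 ≤ e2 := le_min zero_le_one (by positivity)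
    have hwd : ∀ k, dot (w k) (w k) = 1 := fun k => by
      rw [dot]; simpa [pow_two] using hw k
    have hwhd : ∀ k, dot (wh k) (wh k) = 1 := fun k => by
      rw [dot]; simpa [pow_two] using hwh k
    have hsq1 : ∀ (u v : Fin D → ℝ), dot u u = 1 → dot v v = 1 → (dot u v) ^ 2 ≤ 1 := by
      intro u v hu hv
      rw [← sq_abs]
      exact pow_le_one₀ (abs_nonneg _) (dot_abs_le_one hu hv)
    have hcww' : ∀ k l, k ≠ l → (dot (w k) (w l)) ^ 2 ≤ e2 :=
      fun k l h => le_min (hsq1 _ _ (hwd k) (hwd l)) (hcww k l h)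
    have hcwhwh' : ∀ k l, k ≠ l → (dot (wh k) (wh l)) ^ 2 ≤ e2 :=
      fun k l h => le_min (hsq1 _ _ (hwhd k) (hwhd l)) (hcwhwh k l h)
    have hμb : ∀ (r : ℕ) (k : Fin m),
        |hermiteCoeff (fun t => g (t + τ k)) r| ≤ hermBound r a₀ K := by
      intro r k
      refine hermiteCoeff_bound r a₀ K _ (fun y => ?_)
      have h1 := hgrow (y + τ k)
      have hτk : |τ k| ≤ tinf := abs_le.mpr ⟨(hτ k).1, (hτ k).2⟩
      have h2 : |y + τ k| ≤ |y| + tinf := by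
        have := abs_add_le y (τ k)
        linarith
      calc |g (y + τ k)| ≤ |g 0| + K * |y + τ k| := h1
        _ ≤ a₀ + K * |y| := by rw [ha₀]; nlinarith [abs_nonneg y]
    have hνb : ∀ (r : ℕ) (l : Fin m),
        |hermiteCoeff (fun t => deriv g (t + τh l)) r| ≤ hermBound r a₀ K := by
      intro r l
      refine hermiteCoeff_bound r a₀ K _ (fun y => ?_)
      calc |deriv g (y + τh l)| ≤ K := hK _
        _ ≤ a₀ + K * |y| := by
            rw [ha₀]; nlinarith [abs_nonneg y, abs_nonneg (g 0), htinf]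
    have hdF : 0 ≤ deltaF2 w wh :=
      Finset.sum_nonneg fun k _ => Finset.sum_nonneg fun i _ => sq_nonneg _
    have hdO : 0 ≤ deltaO w wh := by
      refine Finset.sum_nonneg fun k _ => Finset.sum_nonneg fun k' _ => ?_
      split_ifs
      · exact le_rfl
      · exact abs_nonneg _
    set Base : ℝ := (m:ℝ) * Real.log m / D *
        (deltaF2 w wh + Real.sqrt (Real.log m / D) * deltaO w wh) with hBase
    have hX : 0 ≤ deltaF2 w wh + Real.sqrt (Real.log m / D) * deltaO w wh :=
      add_nonneg hdF (mul_nonneg (Real.sqrt_nonneg _) hdO)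
    have hBasenn : 0 ≤ Base := by
      rw [hBase]
      exact mul_nonneg (div_nonneg (mul_nonneg (Nat.cast_nonneg m) hlognn) hD0.le) hX
    have hper : ∀ r ∈ Finset.Icc 2 R, (∑ l, (Sterm g w wh τ τh r l) ^ 2)
        ≤ ((r:ℝ) ^ 2 * (hermBound r a₀ K) ^ 4) * ((1 + c₂) * (1 + Real.sqrt c₂)) * Base := by
      intro r hrmem
      have hr2 : 2 ≤ r := (Finset.mem_Icc.mp hrmem).1
      have hSt : ∀ l, Sterm g w wh τ τh r l
          = (hermiteCoeff (fun t => deriv g (t + τh l)) r) *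
            ∑ k, (hermiteCoeff (fun t => g (t + τ k)) r) *
              ((dot (wh k) (wh l)) ^ r - (dot (w k) (wh l)) ^ r) := by
        intro l
        rw [Sterm, Finset.mul_sum]
        exact Finset.sum_congr rfl fun k _ => by ring
      have h1 := per_r_bound w wh
          (fun k => hermiteCoeff (fun t => g (t + τ k)) r)
          (fun l => hermiteCoeff (fun t => deriv g (t + τh l)) r)
          (hermBound r a₀ K) e2 (hermBound_nonneg r a₀ K ha₀nn hKnn)
          (hμb r) (hνb r) hwd hwhd he2nn hcww' hcwhwh' r hr2
      rw [Finset.sum_congr rfl fun l _ => congrArg (· ^ 2) (hSt l)]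
      refine le_trans h1 ?_
      have hP1 : 0 ≤ (hermBound r a₀ K) ^ 4 * (r:ℝ) ^ 2 := by positivity
      have hA : (1 + (m:ℝ) * e2) ≤ (1 + c₂) * ((m:ℝ) * Real.log m / D) := by
        have h2 : (m:ℝ) * e2 ≤ c₂ * ((m:ℝ) * Real.log m / D) := by
          calc (m:ℝ) * e2 ≤ (m:ℝ) * (c₂ * Real.log m / D) :=
              mul_le_mul_of_nonneg_left (min_le_right _ _) (Nat.cast_nonneg m)
            _ = c₂ * ((m:ℝ) * Real.log m / D) := by ring
        nlinarith [hbase1, hc₂]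
      have hB : deltaF2 w wh + Real.sqrt e2 * deltaO w wh
          ≤ (1 + Real.sqrt c₂) *
            (deltaF2 w wh + Real.sqrt (Real.log m / D) * deltaO w wh) := by
        have h3 : Real.sqrt e2 ≤ Real.sqrt c₂ * Real.sqrt (Real.log m / D) := by
          rw [← Real.sqrt_mul hc₂.le]
          refine Real.sqrt_le_sqrt ?_
          calc e2 ≤ c₂ * Real.log m / D := min_le_right _ _
            _ = c₂ * (Real.log m / D) := by ring
        have h4 : Real.sqrt e2 * deltaO w wh
            ≤ Real.sqrt c₂ * (Real.sqrt (Real.log m / D) * deltaO w wh) := by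
          calc Real.sqrt e2 * deltaO w wh
              ≤ (Real.sqrt c₂ * Real.sqrt (Real.log m / D)) * deltaO w wh :=
                mul_le_mul_of_nonneg_right h3 hdO
            _ = _ := by ring
        have h5 : 0 ≤ Real.sqrt (Real.log m / D) * deltaO w wh :=
          mul_nonneg (Real.sqrt_nonneg _) hdO
        nlinarith [Real.sqrt_nonneg c₂, hdF, h4, h5]
      calc (hermBound r a₀ K) ^ 4 * (r:ℝ) ^ 2 * (1 + (m:ℝ) * e2)
            * (deltaF2 w wh + Real.sqrt e2 * deltaO w wh)
          ≤ (hermBound r a₀ K) ^ 4 * (r:ℝ) ^ 2 * ((1 + c₂) * ((m:ℝ) * Real.log m / D)) *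
            ((1 + Real.sqrt c₂) *
              (deltaF2 w wh + Real.sqrt (Real.log m / D) * deltaO w wh)) := by
            refine mul_le_mul (mul_le_mul_of_nonneg_left hA hP1) hB
              (add_nonneg hdF (mul_nonneg (Real.sqrt_nonneg _) hdO))
              (mul_nonneg hP1 (mul_nonneg (by positivity)
                (le_trans zero_le_one hbase1)))
        _ = ((r:ℝ) ^ 2 * (hermBound r a₀ K) ^ 4) * ((1 + c₂) * (1 + Real.sqrt c₂)) * Base := by
            rw [hBase]; ring
    calc ∑ r ∈ Finset.Icc 2 R, (2:ℝ) ^ r * ∑ l, (Sterm g w wh τ τh r l) ^ 2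
        ≤ ∑ r ∈ Finset.Icc 2 R, (2:ℝ) ^ r *
            (((r:ℝ) ^ 2 * (hermBound r a₀ K) ^ 4) * ((1 + c₂) * (1 + Real.sqrt c₂)) * Base) := by
          refine Finset.sum_le_sum fun r hr => ?_
          exact mul_le_mul_of_nonneg_left (hper r hr) (by positivity)
      _ = (∑ r ∈ Finset.Icc 2 R, (2:ℝ) ^ r * (r:ℝ) ^ 2 * (hermBound r a₀ K) ^ 4)
            * ((1 + c₂) * (1 + Real.sqrt c₂)) * Base := by
          rw [Finset.sum_mul, Finset.sum_mul]
          exact Finset.sum_congr rfl fun r _ => by ring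
      _ ≤ ((∑ r ∈ Finset.Icc 2 R, (2:ℝ) ^ r * (r:ℝ) ^ 2 * (hermBound r a₀ K) ^ 4)
            * ((1 + c₂) * (1 + Real.sqrt c₂)) + 1) * Base := by
          refine mul_le_mul_of_nonneg_right ?_ hBasenn
          linarith
      _ = _ := by rw [hBase]; ring
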